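/- Let (S, Σ) be a measurable space and f : S × ℝ^L → ℝ^L be Σ-measurable in the first argument for every fixed x, continuous in the second argument for every fixed α ∈ S, and suppose that for every α ∈ S the equation f(α, x) = 0 has a unique solution x = g(α). Then g : S → ℝ^L is Σ-measurable. -/
import Mathlib

open TopologicalSpace Set Filter Topology

lemma key_compact_preimage {S : Type*} [MeasurableSpace S] {L : ℕ}
    (f : S → (Fin L → ℝ) → (Fin L → ℝ))
    (hmeas : ∀ x, Measurable (fun α => f α x))
    (hcont : ∀ α, Continuous (f α))
    (g : S → Fin L → ℝ)
    (hg : ∀ α, f α (g α) = 0)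
    (huniq : ∀ α x, f α x = 0 → x = g α)
    (K : Set (Fin L → ℝ)) (hK : IsCompact K) :
    MeasurableSet (g ⁻¹' K) := by
  rcases K.eq_empty_or_nonempty with rfl | hne
  · simp
  haveI : Nonempty K := hne.to_subtype
  obtain ⟨D, hD⟩ := TopologicalSpace.exists_dense_seq K
  have hset : g ⁻¹' K = ⋂ m : ℕ, ⋃ n : ℕ, {α | ‖f α (D n : Fin L → ℝ)‖ < 1 / (m + 1)} := by
    ext α
    simp only [mem_preimage, mem_iInter, mem_iUnion, mem_setOf_eq]
    constructor
    · intro hα m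
      have hpos : (0 : ℝ) < 1 / (m + 1) := by positivity
      set V : Set (Fin L → ℝ) := {x | ‖f α x‖ < 1 / (m + 1)} with hV
      have hVopen : IsOpen V := isOpen_lt (by continuity) continuous_const
      have hgV : g α ∈ V := by simp only [hV, mem_setOf_eq, hg α, norm_zero]; positivity
      have : ∃ n, D n ∈ ((↑) : K → Fin L → ℝ) ⁻¹' V := by
        refine hD.exists_mem_open (hVopen.preimage continuous_subtype_val) ⟨⟨g α, hα⟩, hgV⟩
      obtain ⟨n, hn⟩ := this
      exact ⟨n, hn⟩
    · intro h
      choose n hn using h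
      set x : ℕ → K := fun m => D (n m) with hx
      obtain ⟨y, hyK, φ, hφ, hlim⟩ := hK.tendsto_subseq (fun m => (x m).2)
      have hfy : Tendsto (fun k => f α (x (φ k) : Fin L → ℝ)) atTop (𝓝 (f α y)) :=
        ((hcont α).tendsto y).comp hlim
      have hnorm : Tendsto (fun k => ‖f α (x (φ k) : Fin L → ℝ)‖) atTop (𝓝 ‖f α y‖) :=
        hfy.norm
      have hzero : Tendsto (fun k => ‖f α (x (φ k) : Fin L → ℝ)‖) atTop (𝓝 0) := by
        apply squeeze_zero (fun k => norm_nonneg _) (g := fun k : ℕ => 1 / ((k : ℝ) + 1))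
        · intro k
          have h1 : ‖f α (x (φ k) : Fin L → ℝ)‖ < 1 / (φ k + 1) := hn (φ k)
          have h2 : (1 : ℝ) / (φ k + 1) ≤ 1 / (k + 1) := by
            apply one_div_le_one_div_of_le (by positivity)
            have hk : (k : ℝ) ≤ φ k := Nat.cast_le.mpr hφ.le_apply
            linarith
          linarith
        · exact tendsto_one_div_add_atTop_nhds_zero_nat
      have : ‖f α y‖ = 0 := tendsto_nhds_unique hnorm hzero
      have hy0 : f α y = 0 := by simpa using this
      have := huniq α y hy0
      rwa [← this]
  rw [hset]
  refine MeasurableSet.iInter fun m => MeasurableSet.iUnion fun nn => ?_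
  exact measurableSet_lt ((hmeas _).norm) measurable_const

theorem stmt_14 (S : Type*) [MeasurableSpace S] (L : ℕ)
    (f : S → (Fin L → ℝ) → (Fin L → ℝ))
    (hmeas : ∀ x, Measurable (fun α => f α x))
    (hcont : ∀ α, Continuous (f α))
    (g : S → Fin L → ℝ)
    (hg : ∀ α, f α (g α) = 0)
    (huniq : ∀ α x, f α x = 0 → x = g α) :
    Measurable g := by
  apply measurable_of_isClosed
  intro F hF
  have hFU : F = ⋃ n : ℕ, F ∩ Metric.closedBall 0 n := by
    ext x
    simp only [mem_iUnion, mem_inter_iff, Metric.mem_closedBall, dist_zero_right]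
    constructor
    · intro hx
      obtain ⟨n, hn⟩ := exists_nat_ge ‖x‖
      exact ⟨n, hx, hn⟩
    · rintro ⟨n, hx, -⟩; exact hx
  rw [hFU, preimage_iUnion]
  refine MeasurableSet.iUnion fun n => ?_
  exact key_compact_preimage f hmeas hcont g hg huniq _
    ((isCompact_closedBall 0 n).inter_left hF)
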